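/- Let G₁ be an additive commutative group, G₂ a multiplicative commutative group, and e : G₁ → G₁ → G₂ a symmetric bilinear pairing. Let P, Q, W, R, V ∈ G₁ and let α, x_S, h, h' be integers, and set P_pub = α·P and Y_S = x_S·P. If e(V, P) = e(Q + h·Y_S, P_pub) · e(R, W), then V' = V + (h' − h)·(x_S·P_pub) satisfies e(V', P) = e(Q + h'·Y_S, P_pub) · e(R, W). (This is Theorem 2 of the paper: in Kumar et al.'s CLS scheme, a type 1 adversary knowing the signer's secret value x_S and one valid signature (R, V) on a message with hash value h under state information with hash W can forge a valid signature (R, V') on any new message with hash value h' under the same state information.) -/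

import Mathlib

/-- Theorem 2 of the paper: in Kumar et al.'s CLS scheme, a type 1 adversary knowing
the signer's secret value `x_S` and one valid signature `(R, V)` on a message with hash
value `h` under state information with hash `W` can forge a valid signature `(R, V')`
with `V' = V + (h' - h) • (x_S • P_pub)` on any new message with hash value `h'` under
the same state information. -/
theorem kumar_type1_forgery
    {G₁ G₂ : Type*} [AddCommGroup G₁] [CommGroup G₂]
    (e : G₁ → G₁ → G₂)
    (he_left : ∀ a b c : G₁, e (a + b) c = e a c * e b c)
    (he_right : ∀ a b c : G₁, e a (b + c) = e a b * e a c)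
    (he_symm : ∀ a b : G₁, e a b = e b a)
    (P Q W R V : G₁) (α x_S h h' : ℤ)
    (P_pub : G₁) (hPpub : P_pub = α • P)
    (Y_S : G₁) (hYS : Y_S = x_S • P)
    (hvalid : e V P = e (Q + h • Y_S) P_pub * e R W)
    (V' : G₁) (hV' : V' = V + (h' - h) • (x_S • P_pub)) :
    e V' P = e (Q + h' • Y_S) P_pub * e R W := by
  have key : ∀ (n : ℤ) (a b : G₁), e (n • a) b = e a b ^ n := by
    intro n a b
    have := map_zsmul (AddMonoidHom.mk' (fun x => Additive.ofMul (e x b))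
      (by intro x y; exact congrArg Additive.ofMul (he_left x y b))) n a
    simpa using congrArg Additive.toMul this
  have keyr : ∀ (n : ℤ) (a b : G₁), e a (n • b) = e a b ^ n := by
    intro n a b; rw [he_symm, key, he_symm]
  have hx : e (x_S • P_pub) P = e Y_S P_pub := by
    simp only [hYS, hPpub, key, keyr, ← zpow_mul, mul_comm]
  calc e V' P = e V P * e ((h' - h) • (x_S • P_pub)) P := by rw [hV', he_left]
    _ = e (Q + h • Y_S) P_pub * e R W * e Y_S P_pub ^ (h' - h) := by
        rw [hvalid, key, hx]
    _ = e Q P_pub * e Y_S P_pub ^ h * e R W * e Y_S P_pub ^ (h' - h) := by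
        rw [he_left, key]
    _ = e Q P_pub * e Y_S P_pub ^ h' * e R W := by
        rw [mul_right_comm, mul_assoc (e Q P_pub), ← zpow_add, add_sub_cancel]
    _ = e (Q + h' • Y_S) P_pub * e R W := by rw [he_left, key]
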